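/- Let G : ℕ → ℂ satisfy G(i+2) = G(i+1) + G(i) for all i ≥ 0. Then for every nonnegative integer k, ∑_{j=0}^{k} 2^j · j · G(j) = (2/5)·G(1) + (2^{k+2}/5)·k·G(k) + (2^{k+1}/5)·(k − 1)·G(k+1). -/

import Mathlib

theorem two_pow_linear_sum (G : ℕ → ℂ) (hG : ∀ i, G (i + 2) = G (i + 1) + G i)
    (k : ℕ) :
    ∑ j ∈ Finset.range (k + 1), (2 : ℂ) ^ j * (j : ℂ) * G j =
      (2 / 5) * G 1 + ((2 : ℂ) ^ (k + 2) / 5) * (k : ℂ) * G k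
        + ((2 : ℂ) ^ (k + 1) / 5) * ((k : ℂ) - 1) * G (k + 1) := by
  induction k with
  | zero => simp
  | succ n ih =>
    rw [Finset.sum_range_succ, ih, hG n]
    push_cast
    ring
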